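/- Let $X_1, \ldots, X_d$ be i.i.d. standard normal random variables and $\alpha = (\alpha_1, \ldots, \alpha_d) \in \mathbb{R}^d$ have nonnegative entries. Then for every $t > 0$, $\mathbb{P}\big(\sum_{i=1}^d \alpha_i (X_i^2 - 1) \leq -t\big) \leq \exp\big(-\frac{t^2}{4\|\alpha\|_2^2}\big)$. -/

import Mathlib

open MeasureTheory Real ProbabilityTheory
open scoped ENNReal NNReal

lemma gauss_int (a : ℝ) (ha : 0 ≤ a) :
    ∫ y, Real.exp (-(a * y ^ 2)) ∂(gaussianReal 0 1) = (Real.sqrt (1 + 2 * a))⁻¹ := by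
  rw [gaussianReal_of_var_ne_zero 0 one_ne_zero]
  have hmeas : Measurable fun x => (gaussianPDFReal 0 1 x).toNNReal :=
    (measurable_gaussianPDFReal 0 1).real_toNNReal
  have hrw : gaussianPDF 0 1 = fun x => ((gaussianPDFReal 0 1 x).toNNReal : ℝ≥0∞) := by
    funext x; rfl
  rw [hrw, integral_withDensity_eq_integral_smul hmeas]
  have hb : (0:ℝ) < a + 1/2 := by linarith
  have : ∀ x : ℝ, ((gaussianPDFReal 0 1 x).toNNReal : ℝ) • Real.exp (-(a * x ^ 2))
      = (Real.sqrt (2 * π * 1))⁻¹ * Real.exp (-(a + 1/2) * x ^ 2) := by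
    intro x
    rw [smul_eq_mul, Real.coe_toNNReal _ (gaussianPDFReal_nonneg 0 1 x), gaussianPDFReal]
    push_cast
    rw [mul_assoc, ← Real.exp_add]
    congr 1
    ring
  simp_rw [NNReal.smul_def, this]
  rw [integral_const_mul, integral_gaussian]
  have h1 : π / (a + 1/2) = (2 * π * 1) / (1 + 2 * a) := by
    rw [div_eq_div_iff hb.ne' (by linarith : (1:ℝ)+2*a ≠ 0)]
    ring
  rw [h1, Real.sqrt_div (by positivity : (0:ℝ) ≤ 2 * π * 1)]
  have h2 : Real.sqrt (2 * π * 1) ≠ 0 := by positivity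
  field_simp

lemma exp_quad_le (v : ℝ) (hv : 0 ≤ v) : Real.exp (v - v ^ 2 / 2) ≤ 1 + v := by
  have hmono : MonotoneOn (fun y : ℝ => (1 + y) * Real.exp (y ^ 2 / 2 - y)) (Set.Ici 0) := by
    have hd' : ∀ y : ℝ, HasDerivAt (fun y : ℝ => (1 + y) * Real.exp (y ^ 2 / 2 - y))
        (y ^ 2 * Real.exp (y ^ 2 / 2 - y)) y := by
      intro y
      have hd : HasDerivAt (fun y : ℝ => (1 + y) * Real.exp (y ^ 2 / 2 - y))
          (y ^ 2 * Real.exp (y ^ 2 / 2 - y)) y := by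
        have h1 : HasDerivAt (fun y : ℝ => 1 + y) 1 y := (hasDerivAt_id y).const_add 1
        have h2 : HasDerivAt (fun y : ℝ => y ^ 2 / 2 - y) (y - 1) y := by
          have := ((hasDerivAt_pow 2 y).div_const 2).sub (hasDerivAt_id y)
          refine this.congr_deriv ?_
          simp
        have := h1.mul h2.exp
        refine this.congr_deriv ?_
        ring
      exact hd
    apply monotoneOn_of_deriv_nonneg (convex_Ici 0)
    · fun_prop
    · intro y _
      exact (hd' y).differentiableAt.differentiableWithinAt
    · intro y _
      rw [(hd' y).deriv]
      positivity
  have h0 : (1 : ℝ) ≤ (1 + v) * Real.exp (v ^ 2 / 2 - v) := by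
    have := hmono (Set.self_mem_Ici) hv hv
    simpa using this
  have hpos : 0 < Real.exp (v ^ 2 / 2 - v) := Real.exp_pos _
  rw [show v - v ^ 2 / 2 = -(v ^ 2 / 2 - v) by ring, Real.exp_neg]
  rw [inv_le_iff_one_le_mul₀ hpos]
  linarith [mul_comm (1 + v) (Real.exp (v ^ 2 / 2 - v))]

lemma coord_bound (c l : ℝ) (hc : 0 ≤ c) (hl : 0 ≤ l) :
    ∫ y, Real.exp (-l * (c * (y ^ 2 - 1))) ∂(gaussianReal 0 1)
      ≤ Real.exp (l ^ 2 * c ^ 2) := by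
  set u := l * c with hu
  have hu0 : 0 ≤ u := mul_nonneg hl hc
  have hrw : ∀ y : ℝ, Real.exp (-l * (c * (y ^ 2 - 1)))
      = Real.exp u * Real.exp (-(u * y ^ 2)) := by
    intro y; rw [← Real.exp_add]; congr 1; ring
  simp_rw [hrw]
  rw [integral_const_mul, gauss_int u hu0]
  have hsqrt : Real.exp (u - u ^ 2) ≤ Real.sqrt (1 + 2 * u) := by
    rw [Real.le_sqrt (Real.exp_pos _).le]
    have h := exp_quad_le (2 * u) (by positivity)
    calc Real.exp (u - u ^ 2) ^ 2 = Real.exp (2 * u - (2 * u) ^ 2 / 2) := by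
          rw [sq, ← Real.exp_add]; congr 1; ring
      _ ≤ 1 + 2 * u := h
    all_goals positivity
  have hinv : (Real.sqrt (1 + 2 * u))⁻¹ ≤ Real.exp (u ^ 2 - u) := by
    rw [show u ^ 2 - u = -(u - u ^ 2) by ring, Real.exp_neg]
    exact inv_anti₀ (Real.exp_pos _) hsqrt
  calc Real.exp u * (Real.sqrt (1 + 2 * u))⁻¹
      ≤ Real.exp u * Real.exp (u ^ 2 - u) := by
        exact mul_le_mul_of_nonneg_left hinv (Real.exp_pos _).le
    _ = Real.exp (u ^ 2) := by rw [← Real.exp_add]; ring_nf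
    _ = Real.exp (l ^ 2 * c ^ 2) := by rw [hu]; ring_nf

lemma pi_prod_integral (d : ℕ) (f : Fin d → ℝ → ℝ) :
    ∫ x : Fin d → ℝ, ∏ i, f i (x i) ∂(Measure.pi fun _ => gaussianReal 0 1)
      = ∏ i, ∫ y, f i y ∂(gaussianReal 0 1) := by
  letI : MeasureSpace ℝ := ⟨gaussianReal 0 1⟩
  haveI : SigmaFinite (volume : Measure ℝ) := inferInstanceAs (SigmaFinite (gaussianReal 0 1))
  exact integral_fintype_prod_eq_prod f

lemma pi_prod_integrable (d : ℕ) (f : Fin d → ℝ → ℝ)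
    (hf : ∀ i, Integrable (f i) (gaussianReal 0 1)) :
    Integrable (fun x : Fin d → ℝ => ∏ i, f i (x i))
      (Measure.pi fun _ => gaussianReal 0 1) := by
  letI : MeasureSpace ℝ := ⟨gaussianReal 0 1⟩
  haveI : SigmaFinite (volume : Measure ℝ) := inferInstanceAs (SigmaFinite (gaussianReal 0 1))
  exact Integrable.fintype_prod hf

/-- Laurent–Massart lower-tail bound for weighted sums of (centered) squares of
i.i.d. standard normals. -/
theorem stmt_4 (d : ℕ) (α : Fin d → ℝ) (hα : ∀ i, 0 ≤ α i) (t : ℝ) (ht : 0 < t) :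
    (Measure.pi fun _ : Fin d => gaussianReal 0 1)
        {x | ∑ i, α i * (x i ^ 2 - 1) ≤ -t}
      ≤ ENNReal.ofReal (Real.exp (-(t ^ 2) / (4 * ∑ i, α i ^ 2))) := by
  set μ := Measure.pi fun _ : Fin d => gaussianReal 0 1 with hμ
  set s := ∑ i, α i ^ 2 with hsdef
  by_cases hs : s = 0
  · have hzero : ∀ i, α i = 0 := by
      intro i
      have := (Finset.sum_eq_zero_iff_of_nonneg
        (fun j (_ : j ∈ Finset.univ) => sq_nonneg (α j))).mp hs i (Finset.mem_univ i)
      exact pow_eq_zero_iff (n := 2) (by norm_num) |>.mp this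
    have hset : {x : Fin d → ℝ | ∑ i, α i * (x i ^ 2 - 1) ≤ -t} = ∅ := by
      ext x
      simp only [Set.mem_setOf_eq, Set.mem_empty_iff_false, iff_false, not_le]
      have : ∑ i, α i * (x i ^ 2 - 1) = 0 :=
        Finset.sum_eq_zero fun i _ => by rw [hzero i]; ring
      rw [this]; linarith
    rw [hset]
    simp
  · have hs0 : 0 ≤ s := Finset.sum_nonneg fun i _ => sq_nonneg (α i)
    have hspos : 0 < s := lt_of_le_of_ne hs0 (Ne.symm hs)
    set l := t / (2 * s) with hldef
    have hlpos : 0 < l := div_pos ht (by linarith)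
    set X : (Fin d → ℝ) → ℝ := fun x => ∑ i, α i * (x i ^ 2 - 1) with hX
    have hprodform : ∀ x : Fin d → ℝ, Real.exp (-l * X x)
        = ∏ i, Real.exp (-l * (α i * (x i ^ 2 - 1))) := by
      intro x
      rw [← Real.exp_sum]
      congr 1
      rw [hX, Finset.mul_sum]
    -- integrability
    have hint_i : ∀ i, Integrable (fun y : ℝ => Real.exp (-l * (α i * (y ^ 2 - 1))))
        (gaussianReal 0 1) := by
      intro i
      refine Integrable.mono' (integrable_const (Real.exp (l * α i)))
        ?_ (ae_of_all _ fun y => ?_)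
      · exact (Continuous.aestronglyMeasurable (by fun_prop))
      · rw [Real.norm_eq_abs, Real.abs_exp, Real.exp_le_exp]
        have h1 : 0 ≤ l * α i * y ^ 2 :=
          mul_nonneg (mul_nonneg hlpos.le (hα i)) (sq_nonneg y)
        nlinarith
    have h_int : Integrable (fun x => Real.exp (-l * X x)) μ := by
      simp_rw [hprodform]
      exact pi_prod_integrable d _ hint_i
    -- mgf bound
    have hmgf : mgf X μ (-l) ≤ Real.exp (l ^ 2 * s) := by
      rw [mgf]
      calc ∫ x, Real.exp (-l * X x) ∂μ
          = ∏ i, ∫ y, Real.exp (-l * (α i * (y ^ 2 - 1))) ∂(gaussianReal 0 1) := by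
            simp_rw [hprodform]
            rw [hμ]
            exact pi_prod_integral d (fun i y => Real.exp (-l * (α i * (y ^ 2 - 1))))
        _ ≤ ∏ i, Real.exp (l ^ 2 * α i ^ 2) := by
            apply Finset.prod_le_prod
            · exact fun i _ => integral_nonneg fun y => (Real.exp_pos _).le
            · intro i _
              exact coord_bound (α i) l (hα i) hlpos.le
        _ = Real.exp (l ^ 2 * s) := by
            rw [← Real.exp_sum]
            congr 1
            rw [hsdef, Finset.mul_sum]
    -- Chernoff
    have hcher := measure_le_le_exp_mul_mgf (X := X) (μ := μ) (-t)
      (neg_nonpos.mpr hlpos.le) h_int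
    have hfinal : (μ {x | X x ≤ -t}).toReal ≤ Real.exp (-(t ^ 2) / (4 * s)) := by
      refine hcher.trans ?_
      have h1 : Real.exp (-(-l) * -t) * mgf X μ (-l)
          ≤ Real.exp (-(l * t)) * Real.exp (l ^ 2 * s) := by
        rw [show -(-l) * -t = -(l * t) by ring]
        exact mul_le_mul_of_nonneg_left hmgf (Real.exp_pos _).le
      refine h1.trans ?_
      rw [← Real.exp_add]
      apply Real.exp_le_exp.mpr
      rw [hldef]
      have hsne : s ≠ 0 := hspos.ne'
      have heq : -(t / (2 * s) * t) + (t / (2 * s)) ^ 2 * s = -t ^ 2 / (4 * s) := by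
        field_simp
        ring
      linarith [heq]
    rw [← ENNReal.ofReal_toReal (measure_ne_top μ _)]
    exact ENNReal.ofReal_le_ofReal hfinal
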